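/- Let k be a field and let A be a commutative k-algebra that is an integral domain, equipped with a family (δ_j)_{j ∈ J} of k-linear derivations of A. Suppose there exist a finite-dimensional k-vector subspace V of A and a set S of ideals of A satisfying: (i) δ_j(I) ⊆ I for all j ∈ J and all I ∈ S; (ii) the intersection of all ideals in S is the zero ideal; and (iii) V ∩ I ≠ (0) for every I ∈ S. Then there exist a, b ∈ A with b ≠ 0 such that b·δ_j(a) = a·δ_j(b) for every j ∈ J and such that there is no c ∈ k with a = c·b (i.e. the element f = a/b of the fraction field Frac(A) satisfies δ_j(f) = 0 for all j, for the extensions of the δ_j to Frac(A), and f ∉ k). -/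

import Mathlib

/-- Let `A` be a commutative `k`-algebra that is an integral domain,
equipped with a family `(δ j)_{j ∈ J}` of `k`-linear derivations.  Suppose there are a
finite-dimensional `k`-subspace `V` of `A` and a set `S` of ideals of `A` such that every
ideal in `S` is invariant under all the `δ j`, the intersection of the ideals in `S` is zero,
and every ideal in `S` meets `V` nontrivially.  Then there are `a, b ∈ A`, `b ≠ 0`, with
`b·δⱼ(a) = a·δⱼ(b)` for all `j` and `a` not a `k`-multiple of `b`; that is, the element
`f = a/b` of `Frac(A)` is a nonconstant common constant of the derivations. -/
theorem exists_nonconstant_constant_of_derivations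
    {k A : Type*} [Field k] [CommRing A] [IsDomain A] [Algebra k A]
    {J : Type*} (δ : J → (A →ₗ[k] A))
    (hder : ∀ j : J, ∀ x y : A, δ j (x * y) = δ j x * y + x * δ j y)
    (V : Submodule k A) (hV : FiniteDimensional k V)
    (S : Set (Ideal A))
    (hinv : ∀ j : J, ∀ I ∈ S, ∀ x ∈ I, δ j x ∈ I)
    (hzero : sInf S = ⊥)
    (hmeet : ∀ I ∈ S, ∃ v : A, v ∈ V ∧ v ∈ I ∧ v ≠ 0) :
    ∃ a b : A, b ≠ 0 ∧ (∀ j : J, b * δ j a = a * δ j b) ∧ ¬ ∃ c : k, a = c • b := by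
  classical
  by_contra hcon
  push_neg at hcon
  -- `hcon : ∀ a b, b ≠ 0 → (∀ j, b * δ j a = a * δ j b) → ∃ c, a = c • b`
  set d := Module.finrank k V with hd
  let bV : Module.Basis (Fin d) k V := Module.finBasis k V
  set e : Fin d → A := fun i => (bV i : A) with he_def
  have he : LinearIndependent k e :=
    bV.linearIndependent.map' V.subtype V.ker_subtype
  -- iterated derivations along words
  let D : List J → (A →ₗ[k] A) := fun w => w.foldr (fun j f => (δ j) ∘ₗ f) LinearMap.id
  have hDnil : ∀ x : A, D [] x = x := fun x => rfl
  have hDcons : ∀ (j : J) (w : List J) (x : A), D (j :: w) x = δ j (D w x) :=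
    fun j w x => rfl
  have hDI : ∀ (w : List J) (I : Ideal A), I ∈ S → ∀ x ∈ I, D w x ∈ I := by
    intro w I hI
    induction w with
    | nil => intro x hx; exact hx
    | cons j w ih => intro x hx; exact hinv j I hI _ (ih x hx)
  -- Claim 1: the only `A`-linear relation among all the `D w (e i)` (as `i` varies,
  -- uniformly in `w`) is the trivial one.
  have claim1 : ∀ (n : ℕ) (l : Fin d → A), (∀ w : List J, ∑ i, l i * D w (e i) = 0) →
      (Finset.univ.filter (fun i => l i ≠ 0)).card ≤ n → l = 0 := by
    intro n
    induction n using Nat.strong_induction_on with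
    | _ n ih =>
      intro l hl hcard
      by_contra hl0
      obtain ⟨i0, hi0⟩ : ∃ i0, l i0 ≠ 0 := by
        by_contra h
        push_neg at h
        exact hl0 (funext fun i => h i)
      -- applying a derivation to the relations gives new relations
      have hrelδ : ∀ (j : J) (w : List J), ∑ i, δ j (l i) * D w (e i) = 0 := by
        intro j w
        have h3 : ∑ i, δ j (l i * D w (e i)) = 0 := by
          rw [← map_sum, hl w, map_zero]
        have h4 : ∑ i, (δ j (l i) * D w (e i) + l i * D (j :: w) (e i)) = 0 := by
          calc ∑ i, (δ j (l i) * D w (e i) + l i * D (j :: w) (e i))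
              = ∑ i, δ j (l i * D w (e i)) := by
                refine Finset.sum_congr rfl fun i _ => ?_
                rw [hder j (l i) (D w (e i)), hDcons]
            _ = 0 := h3
        rw [Finset.sum_add_distrib, hl (j :: w), add_zero] at h4
        exact h4
      -- the auxiliary relation `m` has smaller support, hence vanishes
      have key : ∀ (j : J) (i : Fin d), l i0 * δ j (l i) - δ j (l i0) * l i = 0 := by
        intro j
        set m : Fin d → A := fun i => l i0 * δ j (l i) - δ j (l i0) * l i with hm
        have hmrel : ∀ w : List J, ∑ i, m i * D w (e i) = 0 := by
          intro w
          have : ∑ i, m i * D w (e i)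
              = l i0 * (∑ i, δ j (l i) * D w (e i)) - δ j (l i0) * (∑ i, l i * D w (e i)) := by
            rw [Finset.mul_sum, Finset.mul_sum, ← Finset.sum_sub_distrib]
            refine Finset.sum_congr rfl fun i _ => ?_
            simp only [hm]
            ring
          rw [this, hrelδ j w, hl w, mul_zero, mul_zero, sub_zero]
        have hsubset : (Finset.univ.filter (fun i => m i ≠ 0))
            ⊆ (Finset.univ.filter (fun i => l i ≠ 0)).erase i0 := by
          intro i hi
          simp only [Finset.mem_filter, Finset.mem_univ, true_and] at hi
          rw [Finset.mem_erase]
          constructor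
          · rintro rfl
            apply hi
            simp only [hm]
            ring
          · simp only [Finset.mem_filter, Finset.mem_univ, true_and]
            intro hli
            apply hi
            simp only [hm, hli, map_zero, mul_zero, zero_mul, sub_zero, mul_zero]
          
        have hi0mem : i0 ∈ Finset.univ.filter (fun i => l i ≠ 0) := by
          simp [hi0]
        have hlt : (Finset.univ.filter (fun i => m i ≠ 0)).card
            < (Finset.univ.filter (fun i => l i ≠ 0)).card :=
          lt_of_le_of_lt (Finset.card_le_card hsubset) (Finset.card_erase_lt_of_mem hi0mem)
        have hm0 : m = 0 := by
          rcases lt_or_ge (Finset.univ.filter (fun i => m i ≠ 0)).card n with h | h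
          · exact ih _ h m hmrel le_rfl
          · exact absurd (lt_of_lt_of_le hlt hcard) (not_lt.mpr h)
        intro i
        have := congrFun hm0 i
        simpa [hm] using this
      -- each `l i` is a `k`-multiple of `l i0`
      have hprop : ∀ i : Fin d, ∃ c : k, l i = c • l i0 := by
        intro i
        refine hcon (l i) (l i0) hi0 fun j => ?_
        have := key j i
        have h' : l i0 * δ j (l i) = δ j (l i0) * l i := sub_eq_zero.mp this
        rw [h', mul_comm]
      choose c hc using hprop
      have h0 : ∑ i, l i * e i = 0 := by
        have := hl []
        simpa [hDnil] using this
      have h1 : l i0 * ∑ i, c i • e i = 0 := by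
        rw [Finset.mul_sum]
        rw [← h0]
        refine Finset.sum_congr rfl fun i _ => ?_
        rw [hc i]
        rw [smul_mul_assoc, mul_smul_comm]
      have h2 : ∑ i, c i • e i = 0 := by
        rcases mul_eq_zero.mp h1 with h | h
        · exact absurd h hi0
        · exact h
      have hczero : ∀ i, c i = 0 := Fintype.linearIndependent_iff.mp he c h2
      apply hi0
      rw [hc i0, hczero i0, zero_smul]
  -- Pass to the fraction field
  let K := FractionRing A
  let ψ : A →+* K := algebraMap A K
  have hψ : Function.Injective ψ := IsFractionRing.injective A K
  set R : List J → (Fin d → K) := fun w i => ψ (D w (e i)) with hR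
  -- Claim 2: the rows `R w` span all of `K^d`
  have hspan : Submodule.span K (Set.range R) = ⊤ := by
    by_contra hne
    obtain ⟨f, hf0, hfmap⟩ :=
      Submodule.exists_dual_map_eq_bot_of_lt_top (lt_top_iff_ne_top.mpr hne) inferInstance
    have hfvanish : ∀ w : List J, f (R w) = 0 := by
      intro w
      have hmem : R w ∈ Submodule.span K (Set.range R) := Submodule.subset_span ⟨w, rfl⟩
      have : f (R w) ∈ (Submodule.span K (Set.range R)).map f :=
        Submodule.mem_map_of_mem hmem
      rw [hfmap] at this
      simpa using this
    set μ : Fin d → K := fun i => f (Pi.single i 1) with hμ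
    have hfx : ∀ x : Fin d → K, f x = ∑ i, x i * μ i := by
      intro x
      have hx : x = ∑ i, x i • Pi.single i (1 : K) := by
        ext j
        simp [Pi.single_apply, Finset.sum_ite_eq' Finset.univ j]
      conv_lhs => rw [hx]
      rw [map_sum]
      refine Finset.sum_congr rfl fun i _ => ?_
      rw [map_smul, smul_eq_mul, hμ]
    have hμne : ∃ i, μ i ≠ 0 := by
      by_contra h
      push_neg at h
      apply hf0
      apply LinearMap.ext
      intro x
      rw [hfx]
      simp [h]
    obtain ⟨b, hb⟩ := IsLocalization.exist_integer_multiples (nonZeroDivisors A)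
      Finset.univ μ
    have hbint : ∀ i : Fin d, ∃ a : A, ψ a = (b : A) • μ i := fun i => hb i (Finset.mem_univ i)
    choose lam hlam using hbint
    have hbψ : ψ (b : A) ≠ 0 := by
      intro h
      have : (b : A) = 0 := hψ (by simpa using h)
      exact nonZeroDivisors.coe_ne_zero b this
    have hrel : ∀ w : List J, ∑ i, lam i * D w (e i) = 0 := by
      intro w
      apply hψ
      rw [map_sum, map_zero]
      calc ∑ i, ψ (lam i * D w (e i))
          = ∑ i, ((b : A) • μ i) * R w i := by
            refine Finset.sum_congr rfl fun i _ => ?_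
            rw [map_mul, hlam i, hR]
        _ = ψ (b : A) * ∑ i, R w i * μ i := by
            rw [Finset.mul_sum]
            refine Finset.sum_congr rfl fun i _ => ?_
            rw [Algebra.smul_def]
            ring
        _ = ψ (b : A) * f (R w) := by rw [hfx (R w)]
        _ = 0 := by rw [hfvanish w, mul_zero]
    have hlam0 : lam = 0 := claim1 d lam hrel (by
      calc (Finset.univ.filter (fun i => lam i ≠ 0)).card
          ≤ Finset.univ.card := Finset.card_filter_le _ _
        _ = d := by simp)
    obtain ⟨i, hi⟩ := hμne
    apply hi
    have h1 : ψ (lam i) = 0 := by rw [hlam0]; simp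
    rw [hlam i, Algebra.smul_def] at h1
    rcases mul_eq_zero.mp h1 with h | h
    · exact absurd h hbψ
    · exact h
  -- Extract `d` words whose rows form a basis of `K^d`
  obtain ⟨t, hts, htspan, htli⟩ := exists_linearIndependent K (Set.range R)
  have htfin : t.Finite := htli.setFinite
  haveI := htfin.fintype
  have hcardt : Fintype.card t = d := by
    let bK : Module.Basis t K (Fin d → K) := Module.Basis.mk htli (by
      rw [Subtype.range_coe, htspan, hspan])
    have := Module.finrank_eq_card_basis bK
    rw [Module.finrank_fin_fun] at this
    omega
  let equiv : Fin d ≃ t := (Fintype.equivFinOfCardEq hcardt).symm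
  have hword : ∀ z : Fin d, ∃ w : List J, R w = ((equiv z : t) : Fin d → K) := by
    intro z
    rcases hts (equiv z).2 with ⟨w, hw⟩
    exact ⟨w, hw⟩
  choose word hword using hword
  let M : Matrix (Fin d) (Fin d) A := Matrix.of fun z i => D (word z) (e i)
  have hMrows : ∀ z : Fin d, (M.map ψ) z = ((equiv z : t) : Fin d → K) := by
    intro z
    ext i
    rw [← hword z]
    rfl
  have hNli : LinearIndependent K (fun z => (M.map ψ) z) := by
    have : LinearIndependent K (fun z : Fin d => ((equiv z : t) : Fin d → K)) :=
      htli.comp equiv equiv.injective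
    convert this using 1
    funext z
    exact hMrows z
  have hNunit : IsUnit (M.map ψ) := Matrix.linearIndependent_rows_iff_isUnit.mp hNli
  have hNdet : (M.map ψ).det ≠ 0 :=
    IsUnit.ne_zero ((Matrix.isUnit_iff_isUnit_det _).mp hNunit)
  have hMdet : M.det ≠ 0 := by
    intro h
    apply hNdet
    have : ψ M.det = (M.map ψ).det := RingHom.map_det ψ M
    rw [← this, h, map_zero]
  -- Final step: `M.det` lies in every ideal of `S`
  have hdetI : ∀ I ∈ S, M.det ∈ I := by
    intro I hI
    obtain ⟨v, hvV, hvI, hv0⟩ := hmeet I hI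
    set c : Fin d → k := fun i => bV.repr ⟨v, hvV⟩ i with hc
    have hvsum : v = ∑ i, c i • e i := by
      have h' := congrArg (Subtype.val : V → A) (bV.sum_repr ⟨v, hvV⟩).symm
      simpa only [Submodule.coe_sum, Submodule.coe_smul] using h'
    -- the vector of images of the `c i` in `A`
    set cA : Fin d → A := fun i => algebraMap k A (c i) with hcA
    have hMc : M.mulVec cA = fun z => D (word z) v := by
      funext z
      rw [Matrix.mulVec]
      show ∑ i, M z i * cA i = D (word z) v
      rw [hvsum, map_sum]
      refine Finset.sum_congr rfl fun i _ => ?_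
      rw [map_smul, Algebra.smul_def, hcA]
      show D (word z) (e i) * algebraMap k A (c i) = algebraMap k A (c i) * D (word z) (e i)
      ring
    have hucI : ∀ z, M.mulVec cA z ∈ I := by
      intro z
      rw [hMc]
      exact hDI (word z) I hI v hvI
    have hadj : ∀ i, M.det * cA i ∈ I := by
      intro i
      have h1 : (M.adjugate.mulVec (M.mulVec cA)) i ∈ I := by
        rw [Matrix.mulVec]
        exact Ideal.sum_mem I fun z _ => Ideal.mul_mem_left I _ (hucI z)
      rw [Matrix.mulVec_mulVec, Matrix.adjugate_mul, Matrix.smul_mulVec,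
        Matrix.one_mulVec] at h1
      simpa [smul_eq_mul] using h1
    obtain ⟨i, hci⟩ : ∃ i, c i ≠ 0 := by
      by_contra h
      push_neg at h
      apply hv0
      rw [hvsum]
      simp [h]
    have h2 : algebraMap k A (c i)⁻¹ * (M.det * cA i) ∈ I :=
      Ideal.mul_mem_left I _ (hadj i)
    have h3 : algebraMap k A (c i)⁻¹ * (M.det * cA i) = M.det := by
      rw [hcA]
      show algebraMap k A (c i)⁻¹ * (M.det * algebraMap k A (c i)) = M.det
      rw [mul_comm (M.det), ← mul_assoc, ← map_mul, inv_mul_cancel₀ hci, map_one, one_mul]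
    rw [h3] at h2
    exact h2
  have : M.det ∈ sInf S := Ideal.mem_sInf.mpr fun {I} hI => hdetI I hI
  rw [hzero] at this
  exact hMdet (by simpa using this)
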